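/- Let (I_1,...,I_n) be a Grassmann necklace and M its positroid. Then each I_i belongs to M, i.e., I_j ≤_j I_i for all j ∈ [n]. -/

import Mathlib

/-- Four elements of `Fin n` are cyclically ordered: some cyclic rotation of the
sequence is strictly increasing in the usual order. -/
def Cyc4 {n : ℕ} (a b c d : Fin n) : Prop :=
  (a < b ∧ b < c ∧ c < d) ∨ (b < c ∧ c < d ∧ d < a) ∨
    (c < d ∧ d < a ∧ a < b) ∨ (d < a ∧ a < b ∧ b < c)

/-- `I` and `J` are weakly separated: there are no cyclically ordered
`a, b, c, d` with `a, c ∈ I \ J` and `b, d ∈ J \ I`. -/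
def WSep {n : ℕ} (I J : Finset (Fin n)) : Prop :=
  ¬ ∃ a b c d : Fin n, Cyc4 a b c d ∧
    a ∈ I \ J ∧ c ∈ I \ J ∧ b ∈ J \ I ∧ d ∈ J \ I

/-- Gale order `≤ᵢ` on subsets of `Fin n`: rotate by `i` and compare the
sorted lists entrywise. -/
def galeLE {n : ℕ} (i : Fin n) (I J : Finset (Fin n)) : Prop :=
  List.Forall₂ (· ≤ ·) ((I.image (fun z => z - i)).sort (· ≤ ·))
    ((J.image (fun z => z - i)).sort (· ≤ ·))

open scoped Fin.NatCast Fin.CommRing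

section Aux

variable {n : ℕ} [NeZero n]

/-- Auxiliary: iterating the necklace condition. -/
lemma neck_chain (N : Fin n → Finset (Fin n))
    (hnest : ∀ i : Fin n, N i \ {i} ⊆ N (i + 1)) :
    ∀ t : ℕ, ∀ j x : Fin n, x ∈ N j → x ∈ N (j + (t : Fin n)) ∨ (x - j).val < t := by
  intro t
  induction t with
  | zero => intro j x hx; left; simpa using hx
  | succ t ih =>
    intro j x hx
    rcases ih j x hx with h | h
    · by_cases hxe : x = j + (t : Fin n)
      · right
        subst hxe
        rw [add_sub_cancel_left, Fin.val_natCast]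
        exact Nat.lt_succ_of_le (Nat.mod_le _ _)
      · left
        have h2 : x ∈ N (j + (t : Fin n)) \ {j + (t : Fin n)} := by
          simp [h, hxe]
        have h3 := hnest _ h2
        have e : (j + (t : Fin n)) + 1 = j + (((t + 1 : ℕ)) : Fin n) := by
          push_cast; ring
        rwa [e] at h3
    · right; omega

lemma list_lem1 {α : Type*} [LinearOrder α] (v : α) :
    ∀ (L : List α), L.Pairwise (· ≤ ·) → ∀ (r : ℕ) (h : r < L.length),
      L.get ⟨r, h⟩ ≤ v → r < (L.filter (fun x => x ≤ v)).length := by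
  intro L
  induction L with
  | nil => intro _ r h; simp at h
  | cons a L ih =>
    intro hs r h hget
    match r with
    | 0 =>
      have ha : a ≤ v := hget
      simp [List.filter_cons, ha]
    | r + 1 =>
      have hL : L.Pairwise (· ≤ ·) := hs.of_cons
      have hr : r < L.length := by simpa using h
      have hget' : L.get ⟨r, hr⟩ ≤ v := hget
      have ha : a ≤ v := le_trans (List.rel_of_pairwise_cons hs (List.get_mem L _)) hget'
      have := ih hL r hr hget'
      have e : (a :: L).filter (fun x => x ≤ v) = a :: L.filter (fun x => x ≤ v) := by
        simp [List.filter_cons, ha]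
      rw [e, List.length_cons]
      omega

lemma list_lem2 {α : Type*} [LinearOrder α] (v : α) :
    ∀ (L : List α), L.Pairwise (· < ·) → ∀ (r : ℕ) (h : r < L.length),
      v < L.get ⟨r, h⟩ → (L.filter (fun x => x ≤ v)).length ≤ r := by
  intro L
  induction L with
  | nil => intro _ r h; simp at h
  | cons a L ih =>
    intro hs r h hget
    match r with
    | 0 =>
      have hva : v < a := hget
      have : (a :: L).filter (fun x => x ≤ v) = [] := by
        rw [List.filter_eq_nil_iff]
        intro x hx
        have : v < x := by
          rcases List.mem_cons.mp hx with rfl | hx'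
          · exact hva
          · exact lt_trans hva (List.rel_of_pairwise_cons hs hx')
        simpa using not_le.mpr this
      simp [this]
    | r + 1 =>
      have hL : L.Pairwise (· < ·) := hs.of_cons
      have hr : r < L.length := by simpa using h
      have hget' : v < L.get ⟨r, hr⟩ := hget
      have := ih hL r hr hget'
      by_cases ha : a ≤ v
      · have e : (a :: L).filter (fun x => x ≤ v) = a :: L.filter (fun x => x ≤ v) := by
          simp [List.filter_cons, ha]
        rw [e, List.length_cons]
        omega
      · have e : (a :: L).filter (fun x => x ≤ v) = L.filter (fun x => x ≤ v) := by
          simp [List.filter_cons, ha]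
        rw [e]
        omega

lemma forall₂_of_counts {α : Type*} [LinearOrder α] (LA LB : List α)
    (hA : LA.Pairwise (· < ·)) (hB : LB.Pairwise (· < ·))
    (hlen : LA.length = LB.length)
    (hc : ∀ v : α, (LB.filter (fun x => x ≤ v)).length ≤
        (LA.filter (fun x => x ≤ v)).length) :
    List.Forall₂ (· ≤ ·) LA LB := by
  rw [List.forall₂_iff_get]
  refine ⟨hlen, fun r h1 h2 => ?_⟩
  by_contra hlt
  push_neg at hlt
  set v := LB.get ⟨r, h2⟩ with hv
  have k1 : r < (LB.filter (fun x => x ≤ v)).length :=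
    list_lem1 v LB (hB.imp le_of_lt) r h2 le_rfl
  have k2 : (LA.filter (fun x => x ≤ v)).length ≤ r :=
    list_lem2 v LA hA r h1 hlt
  have := hc v
  omega

omit [NeZero n] in
lemma length_filter_sort (s : Finset (Fin n)) (p : Fin n → Prop) [DecidablePred p] :
    ((s.sort (· ≤ ·)).filter (fun x => p x)).length = (s.filter p).card := by
  have h1 : List.Perm ((s.sort (· ≤ ·)).filter (fun x => p x)) (s.filter p).toList := by
    rw [← Multiset.coe_eq_coe, ← Multiset.filter_coe (p := p), Finset.sort_eq,
      Finset.toList, Multiset.coe_toList, Finset.filter_val]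
  rw [h1.length_eq, Finset.length_toList]

end Aux

/-- Each term of a Grassmann necklace belongs to the associated positroid. -/
theorem necklace_mem_positroid (n k : ℕ) [NeZero n]
    (N : Fin n → Finset (Fin n))
    (hcard : ∀ i, (N i).card = k)
    (hnest : ∀ i : Fin n, N i \ {i} ⊆ N (i + 1)) :
    ∀ j i : Fin n, galeLE j (N j) (N i) := by
  intro j i
  have hinj : Function.Injective (fun z : Fin n => z - j) := by
    intro a b hab
    simpa using congrArg (· + j) hab
  set t : ℕ := (i - j).val with ht
  have hti : j + ((t : ℕ) : Fin n) = i := by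
    rw [ht, Fin.cast_val_eq_self]
    rw [add_comm, sub_add_cancel]
  -- direction A : elements of N j are in N i or in [j, i)
  have hA : ∀ x ∈ N j, x ∈ N i ∨ (x - j).val < t := by
    intro x hx
    have := neck_chain N hnest t j x hx
    rwa [hti] at this
  -- direction B : elements of N i are in N j or outside [j, i)
  have hB : ∀ x ∈ N i, x ∈ N j ∨ t ≤ (x - j).val := by
    intro x hx
    have htn : t ≤ n := le_of_lt (i - j).isLt
    have hsj : i + (((n - t : ℕ)) : Fin n) = j := by
      have : (((n - t : ℕ)) : Fin n) = j - i := by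
        rw [Nat.cast_sub htn, ht, Fin.cast_val_eq_self]
        simp [sub_sub_eq_add_sub, neg_sub]
      rw [this, add_comm, sub_add_cancel]
    have := neck_chain N hnest (n - t) i x hx
    rw [hsj] at this
    rcases this with h | h
    · exact Or.inl h
    · right
      have hxi : (x - i).val < n - t := h
      have : x - j = (x - i) + (i - j) := by ring
      rw [this, Fin.val_add, ht, Fin.cast_val_eq_self] at *
      rw [Nat.mod_eq_of_lt (by omega)]
      omega
  -- counting inequality
  have hcount : ∀ v : Fin n,
      ((N i).filter (fun x => x - j ≤ v)).card ≤
        ((N j).filter (fun x => x - j ≤ v)).card := by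
    intro v
    by_cases hm : v.val < t
    · apply Finset.card_le_card
      intro x hx
      rw [Finset.mem_filter] at hx ⊢
      refine ⟨?_, hx.2⟩
      rcases hB x hx.1 with h | h
      · exact h
      · exfalso
        have : (x - j).val ≤ v.val := hx.2
        omega
    · push_neg at hm
      have hneg : ((N j).filter (fun x => ¬ (x - j ≤ v))).card ≤
          ((N i).filter (fun x => ¬ (x - j ≤ v))).card := by
        apply Finset.card_le_card
        intro x hx
        rw [Finset.mem_filter] at hx ⊢
        refine ⟨?_, hx.2⟩
        rcases hA x hx.1 with h | h
        · exact h
        · exfalso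
          exact hx.2 (Fin.le_def.mpr (by omega))
      have e1 := Finset.card_filter_add_card_filter_not
        (s := N j) (fun x => x - j ≤ v)
      have e2 := Finset.card_filter_add_card_filter_not
        (s := N i) (fun x => x - j ≤ v)
      rw [hcard] at e1 e2
      omega
  -- assemble
  unfold galeLE
  apply forall₂_of_counts _ _ (List.sortedLT_iff_pairwise.mp (Finset.sortedLT_sort _)) (List.sortedLT_iff_pairwise.mp (Finset.sortedLT_sort _))
  · rw [Finset.length_sort, Finset.length_sort,
      Finset.card_image_of_injective _ hinj, Finset.card_image_of_injective _ hinj,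
      hcard, hcard]
  · intro v
    rw [length_filter_sort, length_filter_sort, Finset.filter_image, Finset.filter_image,
      Finset.card_image_of_injective _ hinj, Finset.card_image_of_injective _ hinj]
    exact hcount v
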